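/- For every natural number n and every integer c ≥ 1, the complex conjugate of X(n,c) equals (-i)ⁿ·X(n,c); equivalently, X(n,c)·e^(-πin/4) is a real number (which is moreover algebraic, being a finite sum of roots of unity). -/

import Mathlib

open Matrix Complex

/-- `SL(2,ℤ)`, the group of 2×2 integer matrices of determinant 1. -/
abbrev SL2Z := Matrix.SpecialLinearGroup (Fin 2) ℤ

/-- The subgroup `G₁` of `SL(2,ℤ)`. -/
def G1 : Subgroup SL2Z :=
  Subgroup.closure
    { (⟨!![1, 4; 0, 1], by norm_num [Matrix.det_fin_two_of]⟩ : SL2Z),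
      ⟨!![3, -5; 2, -3], by norm_num [Matrix.det_fin_two_of]⟩,
      ⟨!![0, -1; 1, 1], by norm_num [Matrix.det_fin_two_of]⟩ }

/-- `χ(c,d)` holds iff some element of `G₁` has bottom row `(c,d)`. -/
def chi (c d : ℤ) : Prop :=
  ∃ (a b : ℤ) (h : a * d - b * c = 1),
    (⟨!![a, b; c, d], by rw [Matrix.det_fin_two_of]; linarith⟩ : SL2Z) ∈ G1

open scoped Classical in
/-- The exponential sum `X(n,c) = Σ_{d=1}^{4c} χ(c,d)·e^{2πind/(4c)}`. -/
noncomputable def X (n : ℕ) (c : ℤ) : ℂ :=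
  ∑ d ∈ Finset.Icc (1 : ℤ) (4 * c),
    if chi c d then Complex.exp (2 * Real.pi * Complex.I * n * d / (4 * c)) else 0

def gT : SL2Z := ⟨!![1, 4; 0, 1], by norm_num [Matrix.det_fin_two_of]⟩
def gA : SL2Z := ⟨!![3, -5; 2, -3], by norm_num [Matrix.det_fin_two_of]⟩
def gR : SL2Z := ⟨!![0, -1; 1, 1], by norm_num [Matrix.det_fin_two_of]⟩

lemma hgT : gT ∈ G1 := Subgroup.subset_closure (by left; rfl)
lemma hgA : gA ∈ G1 := Subgroup.subset_closure (by right; left; rfl)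
lemma hgR : gR ∈ G1 := Subgroup.subset_closure (by right; right; rfl)

def Fm : Matrix (Fin 2) (Fin 2) ℤ := !![1, 1; 0, -1]

lemma Fm_mul_Fm : Fm * Fm = 1 := by
  simp [Fm, Matrix.mul_fin_two, Matrix.one_fin_two]

noncomputable def psi : SL2Z →* SL2Z where
  toFun M := ⟨Fm * M.1 * Fm, by
    have h := M.2
    rw [Matrix.det_mul, Matrix.det_mul, h]
    norm_num [Fm, Matrix.det_fin_two_of]⟩
  map_one' := by
    apply Subtype.ext
    simp [Fm_mul_Fm]
  map_mul' M N := by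
    apply Subtype.ext
    show Fm * (M.1 * N.1) * Fm = (Fm * M.1 * Fm) * (Fm * N.1 * Fm)
    calc Fm * (M.1 * N.1) * Fm = (Fm * M.1) * ((Fm * Fm) * (N.1 * Fm)) := by
          rw [Fm_mul_Fm]; noncomm_ring
      _ = (Fm * M.1 * Fm) * (Fm * N.1 * Fm) := by noncomm_ring

lemma psi_apply (M : SL2Z) : (psi M).1 = Fm * M.1 * Fm := rfl

lemma psi_mem {M : SL2Z} (hM : M ∈ G1) : psi M ∈ G1 := by
  have key : G1 ≤ Subgroup.comap psi G1 := by
    rw [show G1 = Subgroup.closure _ from rfl]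
    apply (Subgroup.closure_le _).2
    intro x hx
    rcases hx with h | h | h
    · -- psi gT = gT⁻¹
      subst h
      show psi gT ∈ G1
      have : psi gT = gT⁻¹ := by
        apply Subtype.ext
        show Fm * gT.1 * Fm = _
        rw [Matrix.SpecialLinearGroup.coe_inv]
        simp [Fm, gT, Matrix.mul_fin_two, Matrix.adjugate_fin_two]
      rw [this]; exact inv_mem hgT
    · subst h
      show psi gA ∈ G1
      have : psi gA = gT⁻¹ * gA⁻¹ * gT := by
        apply Subtype.ext
        show Fm * gA.1 * Fm = _
        rw [Matrix.SpecialLinearGroup.coe_mul, Matrix.SpecialLinearGroup.coe_mul,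
          Matrix.SpecialLinearGroup.coe_inv, Matrix.SpecialLinearGroup.coe_inv]
        simp [Fm, gA, gT, Matrix.mul_fin_two, Matrix.adjugate_fin_two]
      rw [this]
      exact mul_mem (mul_mem (inv_mem hgT) (inv_mem hgA)) hgT
    · subst h
      show psi gR ∈ G1
      have : psi gR = gA * gA * (gR * gR) := by
        apply Subtype.ext
        show Fm * gR.1 * Fm = _
        rw [Matrix.SpecialLinearGroup.coe_mul, Matrix.SpecialLinearGroup.coe_mul,
          Matrix.SpecialLinearGroup.coe_mul]
        simp [Fm, gA, gR, Matrix.mul_fin_two]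
      rw [this]
      exact mul_mem (mul_mem hgA hgA) (mul_mem hgR hgR)
  exact key hM

def U (k : ℤ) : SL2Z := ⟨!![1, 4 * k; 0, 1], by norm_num [Matrix.det_fin_two_of]⟩

lemma U_add (j k : ℤ) : U (j + k) = U j * U k := by
  apply Subtype.ext
  rw [Matrix.SpecialLinearGroup.coe_mul]
  show !![1, 4 * (j + k); 0, 1] = !![1, 4 * j; 0, 1] * !![1, 4 * k; 0, 1]
  ext i l
  fin_cases i <;> fin_cases l <;> simp [Matrix.mul_apply, Fin.sum_univ_two] <;> ring

lemma U_zero : U 0 = 1 := by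
  apply Subtype.ext
  show !![1, 4 * (0:ℤ); 0, 1] = _
  norm_num
  ext i j
  fin_cases i <;> fin_cases j <;> simp [Matrix.one_apply]

lemma U_mem (k : ℤ) : U k ∈ G1 := by
  have h1 : U 1 = gT := by apply Subtype.ext; norm_num [U, gT]
  have hm1 : U (-1) = gT⁻¹ := by
    have h : U (-1) * U 1 = 1 := by rw [← U_add]; norm_num [U_zero]
    rw [← h1]; exact eq_inv_of_mul_eq_one_left h
  induction k using Int.induction_on with
  | zero => rw [U_zero]; exact one_mem G1
  | succ k ih => rw [show ((k:ℤ)+1) = (k:ℤ) + 1 from rfl, U_add]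
                 exact mul_mem ih (h1 ▸ hgT)
  | pred k ih => rw [show (-(k:ℤ)-1) = -(k:ℤ) + (-1) from by ring, U_add]
                 exact mul_mem ih (hm1 ▸ inv_mem hgT)

lemma chi_add {c d : ℤ} (k : ℤ) (h : chi c d) : chi c (d + 4 * c * k) := by
  obtain ⟨a, b, hdet, hmem⟩ := h
  refine ⟨a, b + 4 * a * k, by ring_nf; ring_nf at hdet; linarith, ?_⟩
  obtain ⟨M, hMmat, hMmem⟩ : ∃ M : SL2Z, M.1 = !![a, b; c, d] ∧ M ∈ G1 := ⟨_, rfl, hmem⟩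
  have heq : (⟨!![a, b + 4*a*k; c, d + 4*c*k], by rw [Matrix.det_fin_two_of]; ring_nf; ring_nf at hdet ⊢; linarith⟩ : SL2Z)
      = M * U k := by
    apply Subtype.ext
    rw [Matrix.SpecialLinearGroup.coe_mul, hMmat]
    show _ = !![a, b; c, d] * !![1, 4 * k; 0, 1]
    ext i l
    fin_cases i <;> fin_cases l <;> simp [Matrix.mul_apply, Fin.sum_univ_two] <;> ring
  exact heq ▸ mul_mem hMmem (U_mem k)

lemma chi_flip {c d : ℤ} (h : chi c d) : chi c (c - d) := by
  obtain ⟨a, b, hdet, hmem⟩ := h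
  refine ⟨-a - c, b + d - a - c, by ring_nf; ring_nf at hdet; linarith, ?_⟩
  obtain ⟨M, hMmat, hMmem⟩ : ∃ M : SL2Z, M.1 = !![a, b; c, d] ∧ M ∈ G1 := ⟨_, rfl, hmem⟩
  have heq : (⟨!![-a - c, b + d - a - c; c, c - d], by rw [Matrix.det_fin_two_of]; ring_nf; ring_nf at hdet ⊢; linarith⟩ : SL2Z)
      = gA * gA * psi M := by
    apply Subtype.ext
    rw [Matrix.SpecialLinearGroup.coe_mul, Matrix.SpecialLinearGroup.coe_mul, psi_apply, hMmat]
    show _ = gA.1 * gA.1 * (Fm * !![a, b; c, d] * Fm)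
    rw [show gA.1 = !![3, -5; 2, -3] from rfl, show Fm = !![1, 1; 0, -1] from rfl]
    ext i l
    fin_cases i <;> fin_cases l <;> simp [Matrix.mul_apply, Fin.sum_univ_two] <;> ring
  exact heq ▸ mul_mem (mul_mem hgA hgA) (psi_mem hMmem)

/-- For every `n ≥ 0` and `c ≥ 1`, one has `conj X(n,c) = (-i)ⁿ·X(n,c)`; equivalently,
`X(n,c)·e^{-πin/4}` is a real (and algebraic) number. -/
theorem X_phase (n : ℕ) (c : ℤ) (hc : 1 ≤ c) :
    (starRingEnd ℂ) (X n c) = (-Complex.I) ^ n * X n c ∧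
      ∃ r : ℝ, X n c * Complex.exp (-(Real.pi * Complex.I * n) / 4) = (r : ℂ) ∧
        IsAlgebraic ℚ ((r : ℝ) : ℂ) := by
  classical
  have hc0 : (c : ℂ) ≠ 0 := by
    exact_mod_cast (by omega : c ≠ 0)
  have hcC : (4 : ℂ) * c ≠ 0 := by simp [hc0]
  set θ : ℤ → ℂ := fun d => 2 * Real.pi * Complex.I * n * d / (4 * c) with hθ
  -- the reindexing map
  set f : ℤ → ℤ := fun d => (c - d - 1) % (4 * c) + 1 with hf
  have hm0 : (0 : ℤ) < 4 * c := by linarith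
  have fmem : ∀ d, f d ∈ Finset.Icc (1 : ℤ) (4 * c) := by
    intro d
    have h1 := Int.emod_nonneg (c - d - 1) (by omega : (4*c : ℤ) ≠ 0)
    have h2 := Int.emod_lt_of_pos (c - d - 1) hm0
    simp only [hf, Finset.mem_Icc]
    omega
  have hfd : ∀ d, f d = (c - d) + 4 * c * (-((c - d - 1) / (4 * c))) := by
    intro d
    simp only [hf]
    rw [Int.emod_def]
    ring
  have finv : ∀ d ∈ Finset.Icc (1 : ℤ) (4 * c), f (f d) = d := by
    intro d hd
    rw [Finset.mem_Icc] at hd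
    have : f (f d) = ((c - 2) - (c - d - 1) % (4*c)) % (4*c) + 1 := by
      simp only [hf]; ring_nf
    rw [this, Int.sub_emod (c-2), Int.emod_emod_of_dvd _ dvd_rfl, ← Int.sub_emod,
      show c - 2 - (c - d - 1) = d - 1 by ring, Int.emod_eq_of_lt (by omega) (by omega)]
    omega
  have hchi : ∀ d, chi c d ↔ chi c (f d) := by
    intro d
    constructor
    · intro h
      rw [hfd d]
      exact chi_add _ (chi_flip h)
    · intro h
      have h2 := chi_add (-((c - d - 1) / (4 * c))) (chi_flip h)
      have : c - f d + 4 * c * (-((c - d - 1) / (4 * c))) = d := by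
        have := hfd d; omega
      rwa [this] at h2
  -- exponential facts
  have hexpI : Complex.exp ((Real.pi : ℂ) / 2 * Complex.I) = Complex.I := by
    rw [Complex.exp_mul_I]
    rw [show ((Real.pi : ℂ) / 2) = ((Real.pi / 2 : ℝ) : ℂ) by push_cast; ring]
    rw [← Complex.ofReal_cos, ← Complex.ofReal_sin]
    simp [Real.cos_pi_div_two, Real.sin_pi_div_two]
  have hval : ∀ d : ℤ, (-Complex.I) ^ n * Complex.exp (θ (f d)) = Complex.exp (-θ d) := by
    intro d
    have hcast : ((f d : ℤ) : ℂ) = (c : ℂ) - d + 4 * c * (-(((c - d - 1) / (4 * c) : ℤ) : ℂ)) := by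
      exact_mod_cast congrArg (fun x : ℤ => (x : ℂ)) (hfd d)
    have hsplit : θ (f d) = (n : ℂ) * ((Real.pi : ℂ) / 2 * Complex.I) + (-θ d)
        + ((n : ℂ) * (-(((c - d - 1) / (4 * c) : ℤ) : ℂ))) * (2 * Real.pi * Complex.I) := by
      simp only [hθ, hcast]
      field_simp
      ring
    rw [hsplit, Complex.exp_add, Complex.exp_add]
    have h1 : Complex.exp ((n : ℂ) * ((Real.pi : ℂ) / 2 * Complex.I)) = Complex.I ^ n := by
      rw [Complex.exp_nat_mul, hexpI]
    have h2 : Complex.exp (((n : ℂ) * (-(((c - d - 1) / (4 * c) : ℤ) : ℂ))) * (2 * Real.pi * Complex.I)) = 1 := by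
      have : ((n : ℂ) * (-(((c - d - 1) / (4 * c) : ℤ) : ℂ))) * (2 * Real.pi * Complex.I)
          = (((n : ℤ) * (-((c - d - 1) / (4 * c))) : ℤ) : ℂ) * (2 * Real.pi * Complex.I) := by
        push_cast; ring
      rw [this, Complex.exp_int_mul_two_pi_mul_I]
    rw [h1, h2, mul_one, ← mul_assoc, ← mul_pow]
    norm_num [Complex.I_mul_I]
  -- first part
  have main : (starRingEnd ℂ) (X n c) = (-Complex.I) ^ n * X n c := by
    have hL : (starRingEnd ℂ) (X n c)
        = ∑ d ∈ Finset.Icc (1 : ℤ) (4 * c), if chi c d then Complex.exp (-θ d) else 0 := by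
      rw [X, map_sum]
      refine Finset.sum_congr rfl fun d _ => ?_
      have hconjθ : (starRingEnd ℂ) (θ d) = -θ d := by
        simp only [hθ, map_div₀, _root_.map_mul, Complex.conj_I, Complex.conj_ofReal,
          map_intCast, map_natCast, map_ofNat]
        ring
      rw [apply_ite (starRingEnd ℂ), map_zero, ← Complex.exp_conj, hconjθ]
    have hR : (-Complex.I) ^ n * X n c
        = ∑ d ∈ Finset.Icc (1 : ℤ) (4 * c),
            if chi c d then (-Complex.I) ^ n * Complex.exp (θ d) else 0 := by
      rw [X, Finset.mul_sum]
      exact Finset.sum_congr rfl fun d _ => by rw [mul_ite, mul_zero]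
    rw [hL, hR]
    refine Finset.sum_nbij' f f (fun d _ => fmem d) (fun d _ => fmem d) finv finv
      (fun d hd => ?_)
    by_cases h : chi c d
    · rw [if_pos h, if_pos ((hchi d).1 h), hval d]
    · rw [if_neg h, if_neg (fun hh => h ((hchi d).2 hh))]
  refine ⟨main, ?_⟩
  -- second part
  set z : ℂ := X n c * Complex.exp (-(Real.pi * Complex.I * n) / 4) with hz
  have hmI : Complex.exp (-((Real.pi : ℂ) / 2) * Complex.I) = -Complex.I := by
    rw [Complex.exp_mul_I]
    rw [show (-((Real.pi : ℂ) / 2)) = ((-(Real.pi / 2) : ℝ) : ℂ) by push_cast; ring]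
    rw [← Complex.ofReal_cos, ← Complex.ofReal_sin]
    simp
  have hconjz : (starRingEnd ℂ) z = z := by
    rw [hz, _root_.map_mul, main, ← Complex.exp_conj]
    have hcexp : (starRingEnd ℂ) (-(Real.pi * Complex.I * n) / 4) = (Real.pi * Complex.I * n) / 4 := by
      simp only [map_div₀, map_neg, _root_.map_mul, Complex.conj_I, Complex.conj_ofReal,
        map_natCast, map_ofNat]
      ring
    rw [hcexp]
    have : (-Complex.I) ^ n * Complex.exp (Real.pi * Complex.I * n / 4)
        = Complex.exp (-(Real.pi * Complex.I * n) / 4) := by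
      rw [← hmI, ← Complex.exp_nat_mul, ← Complex.exp_add]
      congr 1
      ring
    rw [← this]; ring
  obtain ⟨r, hr⟩ := Complex.conj_eq_iff_real.1 hconjz
  refine ⟨r, hr ▸ rfl, ?_⟩
  rw [← hr]
  rw [isAlgebraic_iff_isIntegral]
  have hroot : ∀ (w : ℂ) (k : ℕ), k ≠ 0 → w ^ k = 1 → IsIntegral ℚ w := by
    intro w k hk hw
    refine ⟨Polynomial.X ^ k - Polynomial.C 1, Polynomial.monic_X_pow_sub_C 1 hk, ?_⟩
    simp [hw]
  have hXint : IsIntegral ℚ (X n c) := by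
    rw [X]
    refine IsIntegral.sum _ fun d _ => ?_
    by_cases h : chi c d
    · rw [if_pos h]
      refine hroot _ (4 * c).toNat (by omega) ?_
      rw [← Complex.exp_nat_mul]
      have : ((4 * c).toNat : ℂ) * (2 * Real.pi * Complex.I * n * d / (4 * c))
          = (((n : ℤ) * d : ℤ) : ℂ) * (2 * Real.pi * Complex.I) := by
        have h4 : (((4 * c).toNat : ℤ) : ℂ) = 4 * (c : ℂ) := by
          rw [Int.toNat_of_nonneg (by omega : (0:ℤ) ≤ 4 * c)]; push_cast; ring
        push_cast at h4 ⊢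
        field_simp
        linear_combination ((n : ℂ) * d) * h4
      rw [this, Complex.exp_int_mul_two_pi_mul_I]
    · rw [if_neg h]; exact isIntegral_zero
  have heint : IsIntegral ℚ (Complex.exp (-(Real.pi * Complex.I * n) / 4)) := by
    refine hroot _ 8 (by norm_num) ?_
    rw [← Complex.exp_nat_mul]
    have : ((8 : ℕ) : ℂ) * (-(Real.pi * Complex.I * n) / 4) = ((-(n : ℤ) : ℤ) : ℂ) * (2 * Real.pi * Complex.I) := by
      push_cast; ring
    rw [this, Complex.exp_int_mul_two_pi_mul_I]
  exact hXint.mul heint
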